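/- Let W ∈ ℝ^{N×N} be a symmetric matrix with nonnegative entries and positive degrees, with normalized Laplacian L whose eigenvalues are λ(1) ≤ … ≤ λ(N), let C ∈ ℝ^{n×N} be the normalized coarsening matrix of a partition into n nonempty parts, and suppose the coarse normalized Laplacian satisfies L_c = C L Cᵀ with eigenvalues λ_c(1) ≤ … ≤ λ_c(n). Fix k ≤ n and let Ũ ∈ ℝ^{N×(n−k)} have as columns orthonormal eigenvectors of L for its n−k largest eigenvalues; set δ' = ‖(I_N − CᵀC) Ũ‖_F² and λ̃(j) = 2 − λ(N+1−j) for 1 ≤ j ≤ n−k. If δ' < 1, then Σ_{j=1}^{n−k} ((2 − λ(N+1−j)) − (2 − λ_c(n+1−j))) ≥ −(δ'·(2 + Σ_{j=1}^{n−k} λ̃(j)) + √(8 δ' Σ_{j=1}^{n−k} λ̃(j)))/(1 − δ'); equivalently, the tail eigenvalue gaps satisfy Σ_{j=k+1}^{n} (λ(j + N − n) − λ_c(j)) ≤ (δ'·(2 + Σ_{j=1}^{n−k} λ̃(j)) + √(8 δ' Σ_{j=1}^{n−k} λ̃(j)))/(1 − δ'). -/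

import Mathlib

open Matrix BigOperators

noncomputable section

/-- Degree of node `i`: the `i`-th row sum of the weight matrix. -/
def deg {N : ℕ} (W : Matrix (Fin N) (Fin N) ℝ) (i : Fin N) : ℝ := ∑ j, W i j

/-- `D^{-1/2}`: the diagonal matrix of inverse square roots of degrees. -/
def invSqrtDeg {N : ℕ} (W : Matrix (Fin N) (Fin N) ℝ) : Matrix (Fin N) (Fin N) ℝ :=
  Matrix.diagonal fun i => (Real.sqrt (deg W i))⁻¹

/-- Normalized Laplacian `L = I - D^{-1/2} W D^{-1/2}`. -/
def normLap {N : ℕ} (W : Matrix (Fin N) (Fin N) ℝ) : Matrix (Fin N) (Fin N) ℝ :=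
  1 - invSqrtDeg W * W * invSqrtDeg W

/-- Random-walk transition matrix `D^{-1} W`. -/
def rwMat {N : ℕ} (W : Matrix (Fin N) (Fin N) ℝ) : Matrix (Fin N) (Fin N) ℝ :=
  Matrix.diagonal (fun i => (deg W i)⁻¹) * W

/-- The 0/1 partition matrix `P` of the partition encoded by `f` (node `i` lies in part `f i`). -/
def partMat {N n : ℕ} (f : Fin N → Fin n) : Matrix (Fin n) (Fin N) ℝ :=
  fun p i => if f i = p then 1 else 0

/-- Size `|S_p|` of the part `p`. -/
def partSize {N n : ℕ} (f : Fin N → Fin n) (p : Fin n) : ℕ :=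
  (Finset.univ.filter fun i => f i = p).card

/-- Coarse adjacency matrix `W_c = P W Pᵀ`. -/
def coarse {N n : ℕ} (f : Fin N → Fin n) (W : Matrix (Fin N) (Fin N) ℝ) :
    Matrix (Fin n) (Fin n) ℝ :=
  partMat f * W * (partMat f)ᵀ

/-- Lifted adjacency matrix `W_l(i,j) = W_c(f i, f j) / (|S_{f i}|·|S_{f j}|)`. -/
def liftG {N n : ℕ} (f : Fin N → Fin n) (W : Matrix (Fin N) (Fin N) ℝ) :
    Matrix (Fin N) (Fin N) ℝ :=
  fun i j => coarse f W (f i) (f j) / ((partSize f (f i) : ℝ) * (partSize f (f j) : ℝ))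

/-- Normalized coarsening matrix `C` with `C(p,i) = 1/√|S_p|` iff `i ∈ S_p`. -/
def coarsenMat {N n : ℕ} (f : Fin N → Fin n) : Matrix (Fin n) (Fin N) ℝ :=
  fun p i => if f i = p then (Real.sqrt (partSize f p : ℝ))⁻¹ else 0

/-- Pseudo-inverse `P⁺` of the partition matrix, `P⁺(i,p) = 1/|S_p|` iff `i ∈ S_p`. -/
def pinvMat {N n : ℕ} (f : Fin N → Fin n) : Matrix (Fin N) (Fin n) ℝ :=
  fun i p => if f i = p then ((partSize f p : ℝ))⁻¹ else 0

/-- `μ` lists the eigenvalues of `A` in nondecreasing order (with multiplicity):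
`μ` is monotone and the characteristic polynomial of `A` splits as `∏ (X - μ i)`. -/
def sortedEigs {m : ℕ} (A : Matrix (Fin m) (Fin m) ℝ) (μ : Fin m → ℝ) : Prop :=
  Monotone μ ∧ A.charpoly = ∏ i, (Polynomial.X - Polynomial.C (μ i))

/-- Squared Frobenius norm of a matrix. -/
def frobSq {a b : ℕ} (M : Matrix (Fin a) (Fin b) ℝ) : ℝ := ∑ i, ∑ j, (M i j) ^ 2

/-- Partial spectral distance between sorted spectra `μ` (original, size `N`) and
`μc` (coarse, size `n`): `∑_{i=1}^k |μ(i) - μc(i)| + ∑_{i=k+1}^n |μc(i) - μ(i+N-n)|`,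
where `k` is the largest index with `μc k < 1` (for monotone `μc`). -/
def SDpart {N n : ℕ} (h : n ≤ N) (μ : Fin N → ℝ) (μc : Fin n → ℝ) : ℝ :=
  ∑ i : Fin n,
    if μc i < 1 then |μ (Fin.castLE h i) - μc i|
    else |μc i - μ ⟨i.1 + N - n, by have := i.2; omega⟩|

open Polynomial in
lemma frobSq_nonneg {a b : ℕ} (M : Matrix (Fin a) (Fin b) ℝ) : 0 ≤ frobSq M :=
  Finset.sum_nonneg fun _ _ => Finset.sum_nonneg fun _ _ => sq_nonneg _

open Polynomial in
lemma trace_transpose_mul_eq {a b : ℕ} (A B : Matrix (Fin a) (Fin b) ℝ) :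
    (Aᵀ * B).trace = ∑ i, ∑ j, A i j * B i j := by
  rw [Matrix.trace, Finset.sum_comm]
  simp [Matrix.diag, Matrix.mul_apply, Matrix.transpose_apply]

open Polynomial in
lemma frobSq_eq_trace {a b : ℕ} (M : Matrix (Fin a) (Fin b) ℝ) :
    frobSq M = (Mᵀ * M).trace := by
  rw [trace_transpose_mul_eq]; simp [frobSq, sq]

open Polynomial in
lemma abs_trace_transpose_mul_le {a b : ℕ} (A B : Matrix (Fin a) (Fin b) ℝ) :
    |(Aᵀ * B).trace| ≤ Real.sqrt (frobSq A) * Real.sqrt (frobSq B) := by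
  rw [trace_transpose_mul_eq]
  have h := Finset.sum_mul_sq_le_sq_mul_sq Finset.univ
      (fun p : Fin a × Fin b => A p.1 p.2) (fun p => B p.1 p.2)
  have h2 : (∑ p : Fin a × Fin b, A p.1 p.2 * B p.1 p.2) ^ 2 ≤ frobSq A * frobSq B := by
    simpa [frobSq, Fintype.sum_prod_type] using h
  rw [show (∑ i, ∑ j, A i j * B i j) = ∑ p : Fin a × Fin b, A p.1 p.2 * B p.1 p.2 from
    (Fintype.sum_prod_type (f := fun p : Fin a × Fin b => A p.1 p.2 * B p.1 p.2)).symm]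
  calc |∑ p : Fin a × Fin b, A p.1 p.2 * B p.1 p.2|
      = Real.sqrt ((∑ p : Fin a × Fin b, A p.1 p.2 * B p.1 p.2) ^ 2) := (Real.sqrt_sq_eq_abs _).symm
    _ ≤ Real.sqrt (frobSq A * frobSq B) := Real.sqrt_le_sqrt h2
    _ = Real.sqrt (frobSq A) * Real.sqrt (frobSq B) := Real.sqrt_mul (frobSq_nonneg A) _

open Polynomial in
lemma mulvec_sq_le {a b : ℕ} (E : Matrix (Fin a) (Fin b) ℝ) (x : Fin b → ℝ) :
    ∑ i, (∑ j, E i j * x j) ^ 2 ≤ frobSq E * ∑ j, (x j) ^ 2 := by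
  rw [frobSq, Finset.sum_mul]
  refine Finset.sum_le_sum fun i _ => ?_
  exact Finset.sum_mul_sq_le_sq_mul_sq Finset.univ (fun j => E i j) x

open Polynomial in
lemma psd_diag_nonneg {p : ℕ} {M : Matrix (Fin p) (Fin p) ℝ} (hM : M.PosSemidef) (i : Fin p) :
    0 ≤ M i i := by
  have := hM.dotProduct_mulVec_nonneg (Pi.single i 1)
  simpa [dotProduct, Matrix.mulVec, Pi.single_apply] using this

open Polynomial in
lemma psd_trace_nonneg {p : ℕ} {M : Matrix (Fin p) (Fin p) ℝ} (hM : M.PosSemidef) :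
    0 ≤ M.trace :=
  Finset.sum_nonneg fun i _ => psd_diag_nonneg hM i

open Polynomial in
lemma real_spectral {p : ℕ} (A : Matrix (Fin p) (Fin p) ℝ) (hA : Aᵀ = A) :
    ∃ (P : Matrix (Fin p) (Fin p) ℝ) (d : Fin p → ℝ),
      Pᵀ * P = 1 ∧ P * Pᵀ = 1 ∧ A = P * Matrix.diagonal d * Pᵀ := by
  have hH : A.IsHermitian := by
    rw [Matrix.IsHermitian, Matrix.conjTranspose_eq_transpose_of_trivial, hA]
  refine ⟨(hH.eigenvectorUnitary : Matrix (Fin p) (Fin p) ℝ), hH.eigenvalues, ?_, ?_, ?_⟩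
  · have := Matrix.mem_unitaryGroup_iff'.mp hH.eigenvectorUnitary.2
    rwa [Matrix.star_eq_conjTranspose, Matrix.conjTranspose_eq_transpose_of_trivial] at this
  · have := Matrix.mem_unitaryGroup_iff.mp hH.eigenvectorUnitary.2
    rwa [Matrix.star_eq_conjTranspose, Matrix.conjTranspose_eq_transpose_of_trivial] at this
  · have := hH.spectral_theorem
    rw [← Matrix.conjTranspose_eq_transpose_of_trivial, ← Matrix.star_eq_conjTranspose]
    simpa using this

open Polynomial in
lemma charpoly_similar {p : ℕ} (A P Q : Matrix (Fin p) (Fin p) ℝ) (h1 : P * Q = 1) :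
    (P * A * Q).charpoly = A.charpoly := by
  have hmap : (P.map C) * (Q.map C) = 1 := by
    have := congrArg (fun M => M.map (C : ℝ →+* ℝ[X])) h1
    simpa [Matrix.map_mul] using this
  have hmap' : (Q.map C) * (P.map C) = 1 := mul_eq_one_comm.mp hmap
  have hch : charmatrix (P * A * Q) = (P.map C) * charmatrix A * (Q.map C) := by
    rw [charmatrix, charmatrix, Matrix.mul_sub, Matrix.sub_mul]
    congr 1
    · rw [Matrix.scalar_apply]
      have h2 : P.map C * (Matrix.diagonal fun _ => (X:ℝ[X])) = (X:ℝ[X]) • P.map C := by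
        ext i j; rw [Matrix.mul_diagonal, Matrix.smul_apply, smul_eq_mul, mul_comm]
      rw [h2, Matrix.smul_mul, hmap]
      ext i j
      by_cases h : i = j <;> simp [h, Matrix.diagonal_apply, Matrix.one_apply]
    · simp [RingHom.mapMatrix_apply, Matrix.map_mul]
  have hdet : (P.map C).det * (Q.map C).det = 1 := by
    rw [← Matrix.det_mul, hmap]; simp
  rw [Matrix.charpoly, Matrix.charpoly, hch, Matrix.det_mul, Matrix.det_mul]
  calc (P.map C).det * (charmatrix A).det * (Q.map C).det
      = (P.map C).det * (Q.map C).det * (charmatrix A).det := by ring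
    _ = (charmatrix A).det := by rw [hdet, one_mul]

open Polynomial in
lemma charpoly_diagonal_fin {p : ℕ} (d : Fin p → ℝ) :
    (Matrix.diagonal d).charpoly = ∏ i, (X - C (d i)) := by
  have h := Matrix.charpoly_of_upperTriangular (Matrix.diagonal d)
      (Matrix.blockTriangular_diagonal d)
  simpa using h

open Polynomial in
lemma multiset_eq_of_prods {p : ℕ} (d e : Fin p → ℝ)
    (h : (∏ i, (X - C (d i)) : ℝ[X]) = ∏ i, (X - C (e i))) :
    Multiset.map d Finset.univ.val = Multiset.map e Finset.univ.val := by
  have hd : (∏ i, (X - C (d i)) : ℝ[X])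
      = ((Finset.univ.val.map d).map fun a => X - C a).prod := by
    rw [Multiset.map_map]; rfl
  have he : (∏ i, (X - C (e i)) : ℝ[X])
      = ((Finset.univ.val.map e).map fun a => X - C a).prod := by
    rw [Multiset.map_map]; rfl
  have := congrArg Polynomial.roots (hd ▸ he ▸ h)
  rwa [Polynomial.roots_multiset_prod_X_sub_C, Polynomial.roots_multiset_prod_X_sub_C] at this

open Polynomial in
lemma weight_bound {n k m : ℕ} (hkm : k + m = n) (μc : Fin n → ℝ) (hmono : Monotone μc)
    (d w : Fin n → ℝ)
    (hd : Multiset.map d Finset.univ.val = Multiset.map μc Finset.univ.val)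
    (hw0 : ∀ i, 0 ≤ w i) (hw1 : ∀ i, w i ≤ 1) (hws : ∑ i, w i = (m : ℝ)) :
    ∑ i, d i * w i ≤ ∑ t : Fin m, μc ⟨k + t.1, by omega⟩ := by
  rcases Nat.eq_zero_or_pos m with hm | hm
  · subst hm
    have hw : ∀ i ∈ Finset.univ, w i = 0 := by
      rw [← Finset.sum_eq_zero_iff_of_nonneg (fun i _ => hw0 i)]
      simpa using hws
    rw [Finset.sum_eq_zero (fun i hi => by rw [hw i hi, mul_zero])]
    simp
  · have hkn : k < n := by omega
    set c := μc ⟨k, hkn⟩ with hc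
    have step1 : ∑ i, d i * w i ≤ (∑ i, max (d i - c) 0) + c * (m : ℝ) := by
      rw [← hws, Finset.mul_sum, ← Finset.sum_add_distrib]
      refine Finset.sum_le_sum fun i _ => ?_
      have : d i * w i = (d i - c) * w i + c * w i := by ring
      rw [this]
      have h1 : (d i - c) * w i ≤ max (d i - c) 0 := by
        rcases le_or_gt (d i - c) 0 with h | h
        · exact le_trans (mul_nonpos_of_nonpos_of_nonneg h (hw0 i)) (le_max_right _ _)
        · exact le_trans (by nlinarith [hw1 i]) (le_max_left _ _)
      linarith
    have step2 : (∑ i, max (d i - c) 0) = ∑ i, max (μc i - c) 0 := by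
      have h1 : (∑ i, max (d i - c) 0)
          = ((Finset.univ.val.map d).map (fun x => max (x - c) 0)).sum := by
        rw [Multiset.map_map]; rfl
      have h2 : (∑ i, max (μc i - c) 0)
          = ((Finset.univ.val.map μc).map (fun x => max (x - c) 0)).sum := by
        rw [Multiset.map_map]; rfl
      rw [h1, h2, hd]
    have step3 : (∑ i, max (μc i - c) 0) = ∑ t : Fin m, (μc ⟨k + t.1, by omega⟩ - c) := by
      have hval : ∀ i : Fin n, max (μc i - c) 0 = if k ≤ i.1 then μc i - c else 0 := by
        intro i
        split_ifs with h
        · have : c ≤ μc i := hmono (by simp [Fin.le_def]; omega)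
          exact max_eq_left (by linarith)
        · have : μc i ≤ c := hmono (by simp [Fin.le_def]; omega)
          exact max_eq_right (by linarith)
      simp_rw [hval]
      rw [Finset.sum_ite, Finset.sum_const_zero, add_zero]
      refine Finset.sum_nbij' (fun i : Fin n => (⟨i.1 - k, by omega⟩ : Fin m))
        (fun t : Fin m => (⟨k + t.1, by omega⟩ : Fin n)) ?_ ?_ ?_ ?_ ?_
      · intro i hi; simp
      · intro t ht
        simp only [Finset.mem_filter, Finset.mem_univ, true_and]
        omega
      · intro i hi
        simp only [Finset.mem_filter] at hi
        ext
        simp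
        omega
      · intro t ht; ext; simp
      · intro i hi
        simp only [Finset.mem_filter] at hi
        have he : (⟨k + (i.1 - k), by omega⟩ : Fin n) = i := by
          ext; simp; omega
        rw [he]
    rw [step2, step3] at step1
    have : ∑ t : Fin m, (μc ⟨k + t.1, by omega⟩ - c) + c * m
        = ∑ t : Fin m, μc ⟨k + t.1, by omega⟩ := by
      rw [Finset.sum_sub_distrib]
      simp [Finset.sum_const, Finset.card_univ]
      ring
    linarith

open Polynomial in
lemma sym_swap {N : ℕ} (W : Matrix (Fin N) (Fin N) ℝ) (hsymm : W.IsSymm)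
    (g : Fin N → Fin N → ℝ) :
    ∑ i, ∑ j, W i j * g i j = ∑ i, ∑ j, W i j * g j i := by
  rw [Finset.sum_comm]
  refine Finset.sum_congr rfl fun a _ => Finset.sum_congr rfl fun b _ => ?_
  have h := congrFun (congrFun hsymm a) b
  simp only [Matrix.transpose_apply] at h
  rw [h]

open Polynomial in
lemma sym_quad {N : ℕ} (W : Matrix (Fin N) (Fin N) ℝ) (hsymm : W.IsSymm)
    (hnonneg : ∀ i j, 0 ≤ W i j) (y : Fin N → ℝ) (ε : ℝ) (hε : ε = 1 ∨ ε = -1) :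
    0 ≤ (∑ i, ∑ j, W i j * (y i * y i)) - ε * ∑ i, ∑ j, W i j * (y i * y j) := by
  have hsq : 0 ≤ ∑ i, ∑ j, W i j * (y i - ε * y j) ^ 2 :=
    Finset.sum_nonneg fun i _ => Finset.sum_nonneg fun j _ =>
      mul_nonneg (hnonneg i j) (sq_nonneg _)
  have hswap : ∑ i, ∑ j, W i j * (y j * y j) = ∑ i, ∑ j, W i j * (y i * y i) :=
    (sym_swap W hsymm fun i j => y i * y i).symm
  have hexp : ∑ i, ∑ j, W i j * (y i - ε * y j) ^ 2
      = (∑ i, ∑ j, W i j * (y i * y i)) + (∑ i, ∑ j, W i j * (y j * y j))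
        - 2 * ε * ∑ i, ∑ j, W i j * (y i * y j) := by
    have hpt : ∀ i j : Fin N, W i j * (y i - ε * y j) ^ 2
        = W i j * (y i * y i) + W i j * (y j * y j) - 2 * ε * (W i j * (y i * y j)) := by
      intro i j; rcases hε with h | h <;> subst h <;> ring
    simp_rw [hpt, Finset.sum_sub_distrib, Finset.sum_add_distrib, ← Finset.mul_sum]
  rw [hexp, hswap] at hsq
  linarith

open Polynomial in
lemma normLap_psd {N : ℕ} (W : Matrix (Fin N) (Fin N) ℝ) (hsymm : W.IsSymm)
    (hnonneg : ∀ i j, 0 ≤ W i j) (hdeg : ∀ i, 0 < deg W i) :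
    (normLap W).PosSemidef ∧
      ((2:ℝ) • (1 : Matrix (Fin N) (Fin N) ℝ) - normLap W).PosSemidef := by
  set a : Fin N → ℝ := fun i => (Real.sqrt (deg W i))⁻¹ with ha
  set S : Matrix (Fin N) (Fin N) ℝ := invSqrtDeg W * W * invSqrtDeg W with hS
  have hStrans : Sᵀ = S := by
    rw [hS, Matrix.transpose_mul, Matrix.transpose_mul]
    rw [show (invSqrtDeg W)ᵀ = invSqrtDeg W from Matrix.diagonal_transpose _, hsymm]
    rw [Matrix.mul_assoc]
  have hSentry : ∀ i j, S i j = a i * W i j * a j := by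
    intro i j
    rw [hS, invSqrtDeg, Matrix.mul_diagonal, Matrix.diagonal_mul]
  have hQF : ∀ (x : Fin N → ℝ) (ε : ℝ), ε = 1 ∨ ε = -1 →
      0 ≤ dotProduct x (((1 : Matrix (Fin N) (Fin N) ℝ) - ε • S) *ᵥ x) := by
    intro x ε hε
    set y : Fin N → ℝ := fun i => x i * a i with hy
    have hA : dotProduct x x = ∑ i, ∑ j, W i j * (y i * y i) := by
      rw [dotProduct]
      refine Finset.sum_congr rfl fun i _ => ?_
      have hd := (hdeg i).le
      have h1 : a i * a i * deg W i = 1 := by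
        rw [ha]
        simp only
        rw [← mul_inv, Real.mul_self_sqrt hd]
        exact inv_mul_cancel₀ (hdeg i).ne'
      calc x i * x i = (x i * x i) * (a i * a i * deg W i) := by rw [h1, mul_one]
        _ = (y i * y i) * deg W i := by rw [hy]; ring
        _ = ∑ j, W i j * (y i * y i) := by
            rw [deg, Finset.mul_sum]
            exact Finset.sum_congr rfl fun j _ => by ring
    have hB : dotProduct x (S *ᵥ x) = ∑ i, ∑ j, W i j * (y i * y j) := by
      rw [dotProduct]
      refine Finset.sum_congr rfl fun i _ => ?_
      rw [show (S *ᵥ x) i = ∑ j, S i j * x j from rfl, Finset.mul_sum]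
      refine Finset.sum_congr rfl fun j _ => ?_
      rw [hSentry i j, hy]
      ring
    have hexp : dotProduct x (((1 : Matrix (Fin N) (Fin N) ℝ) - ε • S) *ᵥ x)
        = dotProduct x x - ε * dotProduct x (S *ᵥ x) := by
      rw [Matrix.sub_mulVec, dotProduct_sub, Matrix.one_mulVec, Matrix.smul_mulVec,
        dotProduct_smul]
      simp
    rw [hexp, hA, hB]
    exact sym_quad W hsymm hnonneg y ε hε
  have hherm : ∀ (M : Matrix (Fin N) (Fin N) ℝ), Mᵀ = M → M.IsHermitian := by
    intro M h
    rw [Matrix.IsHermitian, Matrix.conjTranspose_eq_transpose_of_trivial, h]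
  constructor
  · refine Matrix.PosSemidef.of_dotProduct_mulVec_nonneg ?_ ?_
    · apply hherm
      rw [normLap, Matrix.transpose_sub, Matrix.transpose_one, hStrans]
    · intro x
      have := hQF x 1 (Or.inl rfl)
      simpa [normLap, star_trivial] using this
  · refine Matrix.PosSemidef.of_dotProduct_mulVec_nonneg ?_ ?_
    · apply hherm
      rw [Matrix.transpose_sub, Matrix.transpose_smul, Matrix.transpose_one, normLap,
        Matrix.transpose_sub, Matrix.transpose_one, hStrans]
    · intro x
      have := hQF x (-1) (Or.inr rfl)
      have h2 : (2:ℝ) • (1 : Matrix (Fin N) (Fin N) ℝ) - normLap W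
          = (1 : Matrix (Fin N) (Fin N) ℝ) - (-1 : ℝ) • S := by
        rw [normLap, two_smul]
        rw [neg_one_smul]
        abel
      rw [h2]
      simpa [star_trivial] using this

open Polynomial in
lemma coarsen_CCT {N n : ℕ} (f : Fin N → Fin n) (hsurj : Function.Surjective f) :
    coarsenMat f * (coarsenMat f)ᵀ = 1 := by
  ext p q
  rw [Matrix.mul_apply]
  simp only [coarsenMat, Matrix.transpose_apply]
  by_cases h : p = q
  · subst h
    rw [Matrix.one_apply_eq]
    have hpos : 0 < partSize f p := by
      obtain ⟨i, hi⟩ := hsurj p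
      exact Finset.card_pos.mpr ⟨i, Finset.mem_filter.mpr ⟨Finset.mem_univ _, hi⟩⟩
    have hposR : (0:ℝ) < (partSize f p : ℝ) := by exact_mod_cast hpos
    have hpt : ∀ i : Fin N,
        (if f i = p then (Real.sqrt (partSize f p : ℝ))⁻¹ else 0) *
          (if f i = p then (Real.sqrt (partSize f p : ℝ))⁻¹ else 0)
        = if f i = p then ((partSize f p : ℝ))⁻¹ else 0 := by
      intro i
      split_ifs with h
      · rw [← mul_inv, Real.mul_self_sqrt hposR.le]
      · ring
    rw [Finset.sum_congr rfl fun i _ => hpt i, Finset.sum_ite, Finset.sum_const_zero, add_zero,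
      Finset.sum_const, nsmul_eq_mul]
    rw [show (Finset.univ.filter fun i => f i = p).card = partSize f p from rfl]
    exact mul_inv_cancel₀ hposR.ne'
  · rw [Matrix.one_apply_ne h]
    refine Finset.sum_eq_zero fun i _ => ?_
    split_ifs with h1 h2
    · exact absurd (h1 ▸ h2) h
    · ring
    · ring
    · ring

open Polynomial in
lemma main_aux {N n k m : ℕ} (hkm : k + m = n) (hnN : n ≤ N)
    (W : Matrix (Fin N) (Fin N) ℝ) (hsymm : W.IsSymm) (hnonneg : ∀ i j, 0 ≤ W i j)
    (hdeg : ∀ i, 0 < deg W i)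
    (f : Fin N → Fin n) (hsurj : Function.Surjective f)
    (μ : Fin N → ℝ) (U : Matrix (Fin N) (Fin N) ℝ)
    (hUorth : Uᵀ * U = 1)
    (hdecomp : normLap W = U * Matrix.diagonal μ * Uᵀ)
    (hcons : normLap (coarse f W) = coarsenMat f * normLap W * (coarsenMat f)ᵀ)
    (μc : Fin n → ℝ) (hμc : sortedEigs (normLap (coarse f W)) μc)
    (Ut : Matrix (Fin N) (Fin m) ℝ)
    (hUt : ∀ (i : Fin N) (j : Fin m), Ut i j = U i ⟨N - m + j.1, by omega⟩)
    (δ' : ℝ) (hδ' : δ' = frobSq ((1 - (coarsenMat f)ᵀ * coarsenMat f) * Ut))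
    (hδ'1 : δ' < 1)
    (S' : ℝ) (hS' : S' = ∑ j : Fin m, (2 - μ ⟨N - m + j.1, by omega⟩)) :
    (∑ t : Fin m, (2 - μc ⟨k + t.1, by omega⟩)) - S'
      ≤ (δ' * (2 + S') + Real.sqrt (8 * δ' * S')) / (1 - δ') := by
  classical
  have hmN : m ≤ N := by omega
  set CM := coarsenMat f with hCM
  set L := normLap W with hLdef
  set Lc := normLap (coarse f W) with hLcdef
  set Q : Matrix (Fin N) (Fin N) ℝ := (2:ℝ) • 1 - L with hQdef
  set Qc : Matrix (Fin n) (Fin n) ℝ := (2:ℝ) • 1 - Lc with hQcdef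
  obtain ⟨hLpsd, hQpsd⟩ := normLap_psd W hsymm hnonneg hdeg
  have hCC : CM * CMᵀ = 1 := coarsen_CCT f hsurj
  set P0 : Matrix (Fin N) (Fin N) ℝ := CMᵀ * CM with hP0
  have hP0t : P0ᵀ = P0 := by
    rw [hP0, Matrix.transpose_mul, Matrix.transpose_transpose]
  have hP0i : P0 * P0 = P0 := by
    rw [hP0, Matrix.mul_assoc, ← Matrix.mul_assoc CM, hCC, Matrix.one_mul]
  set E := ((1 : Matrix (Fin N) (Fin N) ℝ) - P0) * Ut with hE
  have hδE : δ' = (Eᵀ * E).trace := by rw [hδ', frobSq_eq_trace]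
  have hδ0 : 0 ≤ δ' := by rw [hδ']; exact frobSq_nonneg _
  have h1δ : 0 < 1 - δ' := by linarith
  have hUU : U * Uᵀ = 1 := mul_eq_one_comm.mp hUorth
  have hLt : Lᵀ = L := by
    rw [hdecomp, Matrix.transpose_mul, Matrix.transpose_mul,
      Matrix.transpose_transpose, Matrix.diagonal_transpose, Matrix.mul_assoc]
  have hQt : Qᵀ = Q := by
    rw [hQdef, Matrix.transpose_sub, Matrix.transpose_smul, Matrix.transpose_one, hLt]
  have hdiagU : Uᵀ * L * U = Matrix.diagonal μ := by
    rw [hdecomp, Matrix.mul_assoc, Matrix.mul_assoc, hUorth, Matrix.mul_one,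
      ← Matrix.mul_assoc, hUorth, Matrix.one_mul]
  have hμ0 : ∀ i, 0 ≤ μ i := by
    have hdpsd : (Matrix.diagonal μ).PosSemidef := by
      rw [← hdiagU]
      have := hLpsd.conjTranspose_mul_mul_same U
      rwa [Matrix.conjTranspose_eq_transpose_of_trivial] at this
    intro i
    have := psd_diag_nonneg hdpsd i
    rwa [Matrix.diagonal_apply_eq] at this
  have h2d : (2:ℝ) • (1 : Matrix (Fin N) (Fin N) ℝ) - Matrix.diagonal μ
      = Matrix.diagonal (fun i => 2 - μ i) := by
    ext i j
    by_cases h : i = j <;> simp [h, Matrix.diagonal_apply, Matrix.one_apply]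
  have hμ2 : ∀ i, μ i ≤ 2 := by
    have hQU : Uᵀ * Q * U = Matrix.diagonal (fun i => 2 - μ i) := by
      rw [hQdef, Matrix.mul_sub, Matrix.sub_mul, Matrix.mul_smul, Matrix.mul_one,
        Matrix.smul_mul, hUorth, hdiagU, h2d]
    have hdpsd : (Matrix.diagonal (fun i => 2 - μ i)).PosSemidef := by
      rw [← hQU]
      have := hQpsd.conjTranspose_mul_mul_same U
      rwa [Matrix.conjTranspose_eq_transpose_of_trivial] at this
    intro i
    have := psd_diag_nonneg hdpsd i
    rw [Matrix.diagonal_apply_eq] at this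
    linarith
  have hS'0 : 0 ≤ S' := by
    rw [hS']
    exact Finset.sum_nonneg fun j _ => by linarith [hμ2 ⟨N - m + j.1, by omega⟩]
  set g : Fin m → Fin N := fun j => ⟨N - m + j.1, by omega⟩ with hg
  have hUtg : ∀ (i : Fin N) (j : Fin m), Ut i j = U i (g j) := hUt
  have hginj : ∀ a b : Fin m, g a = g b → a = b := by
    intro a b hab
    have := congrArg Fin.val hab
    simp only [hg] at this
    exact Fin.ext (by omega)
  have hUtU : Utᵀ * Ut = 1 := by
    ext a b
    rw [Matrix.mul_apply]
    simp only [Matrix.transpose_apply]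
    rw [Finset.sum_congr rfl fun i _ => by rw [hUtg i a, hUtg i b]]
    have hUU' := congrFun (congrFun hUorth (g a)) (g b)
    rw [Matrix.mul_apply] at hUU'
    simp only [Matrix.transpose_apply] at hUU'
    rw [hUU']
    by_cases h : a = b
    · subst h; simp
    · rw [Matrix.one_apply_ne (fun hc => h (hginj a b hc)), Matrix.one_apply_ne h]
  have hLU : L * U = U * Matrix.diagonal μ := by
    rw [hdecomp, Matrix.mul_assoc (U * Matrix.diagonal μ) Uᵀ U, hUorth, Matrix.mul_one]
  have hLUt : L * Ut = Ut * Matrix.diagonal (fun j => μ (g j)) := by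
    ext i j
    have e1 : (L * Ut) i j = (L * U) i (g j) := by
      rw [Matrix.mul_apply, Matrix.mul_apply]
      exact Finset.sum_congr rfl fun l _ => by rw [hUtg]
    rw [e1, hLU, Matrix.mul_diagonal, Matrix.mul_diagonal, hUtg]
  have hQUt : Q * Ut = Ut * Matrix.diagonal (fun j => 2 - μ (g j)) := by
    rw [hQdef, Matrix.sub_mul, Matrix.smul_mul, Matrix.one_mul, hLUt]
    have h2d' : (Matrix.diagonal (fun j : Fin m => 2 - μ (g j)))
        = (2:ℝ) • (1 : Matrix (Fin m) (Fin m) ℝ) - Matrix.diagonal (fun j => μ (g j)) := by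
      ext a b
      by_cases h : a = b <;> simp [h, Matrix.diagonal_apply, Matrix.one_apply]
    rw [h2d', Matrix.mul_sub, Matrix.mul_smul, Matrix.mul_one]
  have htrQUt : (Utᵀ * (Q * Ut)).trace = S' := by
    rw [hQUt, ← Matrix.mul_assoc, hUtU, Matrix.one_mul, Matrix.trace_diagonal, hS']
  have hfQUt : frobSq (Q * Ut) ≤ 2 * S' := by
    rw [frobSq_eq_trace, hQUt, Matrix.transpose_mul, Matrix.diagonal_transpose,
      Matrix.mul_assoc, ← Matrix.mul_assoc Utᵀ Ut, hUtU, Matrix.one_mul,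
      Matrix.diagonal_mul_diagonal, Matrix.trace_diagonal]
    have hpt : ∀ j : Fin m, (2 - μ (g j)) * (2 - μ (g j)) ≤ 2 * (2 - μ (g j)) := by
      intro j; nlinarith [hμ0 (g j), hμ2 (g j)]
    calc ∑ j, (2 - μ (g j)) * (2 - μ (g j)) ≤ ∑ j, 2 * (2 - μ (g j)) :=
          Finset.sum_le_sum fun j _ => hpt j
      _ = 2 * S' := by rw [hS', Finset.mul_sum]
  have hprojt : ((1 : Matrix (Fin N) (Fin N) ℝ) - P0)ᵀ = 1 - P0 := by
    rw [Matrix.transpose_sub, Matrix.transpose_one, hP0t]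
  have hproj : ((1 : Matrix (Fin N) (Fin N) ℝ) - P0) * (1 - P0) = 1 - P0 := by
    simp only [Matrix.mul_sub, Matrix.sub_mul, Matrix.mul_one, Matrix.one_mul, hP0i]
    abel
  have hUtE : Utᵀ * E = Eᵀ * E := by
    rw [hE, Matrix.transpose_mul, hprojt, Matrix.mul_assoc,
      ← Matrix.mul_assoc (1 - P0) (1 - P0) Ut, hproj]
  set B := CM * Ut with hB
  have hPUt : P0 * Ut = Ut - E := by
    rw [hE, Matrix.sub_mul, Matrix.one_mul]
    abel
  have hBtB : Bᵀ * B = 1 - Eᵀ * E := by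
    rw [hB, Matrix.transpose_mul, Matrix.mul_assoc, ← Matrix.mul_assoc CMᵀ CM Ut, ← hP0,
      hPUt, Matrix.mul_sub, hUtU, hUtE]
  have hQc : Qc = CM * Q * CMᵀ := by
    rw [hQcdef, hcons, hQdef, Matrix.mul_sub, Matrix.sub_mul, Matrix.mul_smul, Matrix.mul_one,
      Matrix.smul_mul, hCC]
  set A := (P0 * Ut)ᵀ * Q * (P0 * Ut) with hA
  have hBtQcB : Bᵀ * Qc * B = A := by
    have e1 : A = Utᵀ * (CMᵀ * (CM * (Q * (CMᵀ * (CM * Ut))))) := by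
      rw [hA, Matrix.transpose_mul, hP0t, hP0]
      simp only [Matrix.mul_assoc]
    rw [e1, hQc, hB, Matrix.transpose_mul]
    simp only [Matrix.mul_assoc]
  have hApsd : A.PosSemidef := by
    have := hQpsd.conjTranspose_mul_mul_same (P0 * Ut)
    rwa [Matrix.conjTranspose_eq_transpose_of_trivial] at this
  have htrA : A.trace ≤ S' + 2 * (Real.sqrt (2 * S') * Real.sqrt δ') + 2 * δ' := by
    have hexpA : A = Utᵀ * (Q * Ut) - Utᵀ * (Q * E) - (Eᵀ * (Q * Ut) - Eᵀ * (Q * E)) := by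
      rw [hA, hPUt]
      simp only [Matrix.transpose_sub, Matrix.sub_mul, Matrix.mul_sub, Matrix.mul_assoc]
      abel
    have hcross : Utᵀ * (Q * E) = (Q * Ut)ᵀ * E := by
      rw [Matrix.transpose_mul, hQt, Matrix.mul_assoc]
    have htr' : A.trace = (Utᵀ * (Q * Ut)).trace - ((Q * Ut)ᵀ * E).trace
        - ((Eᵀ * (Q * Ut)).trace - (Eᵀ * (Q * E)).trace) := by
      rw [hexpA, hcross, Matrix.trace_sub, Matrix.trace_sub, Matrix.trace_sub]
    have hsqE : Real.sqrt (frobSq E) = Real.sqrt δ' := by rw [hδ']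
    have hsqQ : Real.sqrt (frobSq (Q * Ut)) ≤ Real.sqrt (2 * S') := Real.sqrt_le_sqrt hfQUt
    have hsq0 : 0 ≤ Real.sqrt δ' := Real.sqrt_nonneg _
    have hb1 : |((Q * Ut)ᵀ * E).trace| ≤ Real.sqrt (2 * S') * Real.sqrt δ' := by
      have := abs_trace_transpose_mul_le (Q * Ut) E
      rw [hsqE] at this
      calc |((Q * Ut)ᵀ * E).trace| ≤ Real.sqrt (frobSq (Q * Ut)) * Real.sqrt δ' := this
        _ ≤ Real.sqrt (2 * S') * Real.sqrt δ' := mul_le_mul_of_nonneg_right hsqQ hsq0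
    have hb2 : |(Eᵀ * (Q * Ut)).trace| ≤ Real.sqrt (2 * S') * Real.sqrt δ' := by
      have := abs_trace_transpose_mul_le E (Q * Ut)
      rw [hsqE] at this
      calc |(Eᵀ * (Q * Ut)).trace| ≤ Real.sqrt δ' * Real.sqrt (frobSq (Q * Ut)) := this
        _ ≤ Real.sqrt δ' * Real.sqrt (2 * S') := mul_le_mul_of_nonneg_left hsqQ hsq0
        _ = Real.sqrt (2 * S') * Real.sqrt δ' := mul_comm _ _
    have hb3 : (Eᵀ * (Q * E)).trace ≤ 2 * δ' := by
      have e3 : Eᵀ * (Q * E) = (2:ℝ) • (Eᵀ * E) - Eᵀ * (L * E) := by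
        rw [hQdef, Matrix.sub_mul, Matrix.smul_mul, Matrix.one_mul, Matrix.mul_sub,
          Matrix.mul_smul]
      have hLE : (Eᵀ * (L * E)).PosSemidef := by
        have := hLpsd.conjTranspose_mul_mul_same E
        rw [Matrix.conjTranspose_eq_transpose_of_trivial] at this
        rwa [Matrix.mul_assoc] at this
      have := psd_trace_nonneg hLE
      rw [e3, Matrix.trace_sub, Matrix.trace_smul, ← hδE]
      simp only [smul_eq_mul]
      linarith
    rw [htr', htrQUt]
    have h1 := abs_le.mp hb1
    have h2 := abs_le.mp hb2
    linarith [h1.1, h2.1]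
  have hBtBt : (Bᵀ * B)ᵀ = Bᵀ * B := by
    rw [Matrix.transpose_mul, Matrix.transpose_transpose]
  obtain ⟨R, s, hRtR, hRRt, hBdec⟩ := real_spectral (Bᵀ * B) hBtBt
  have hds : Matrix.diagonal s = Rᵀ * (Bᵀ * B) * R := by
    rw [hBdec]
    simp only [← Matrix.mul_assoc]
    rw [hRtR, Matrix.one_mul, Matrix.mul_assoc, hRtR, Matrix.mul_one]
  have hds2 : Matrix.diagonal s = 1 - (E * R)ᵀ * (E * R) := by
    rw [hds, hBtB, Matrix.mul_sub, Matrix.mul_one, Matrix.sub_mul, hRtR]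
    congr 1
    rw [Matrix.transpose_mul E R]
    simp only [Matrix.mul_assoc]
  have hsge : ∀ i, 1 - δ' ≤ s i := by
    intro i
    have h2 : s i = 1 - ∑ j, ((E * R) j i) ^ 2 := by
      have hii := congrFun (congrFun hds2 i) i
      rw [Matrix.diagonal_apply_eq] at hii
      rw [hii, Matrix.sub_apply, Matrix.one_apply_eq, Matrix.mul_apply]
      congr 1
      refine Finset.sum_congr rfl fun j _ => ?_
      rw [Matrix.transpose_apply, sq]
    have h3 : ∑ j, ((E * R) j i) ^ 2 ≤ δ' := by
      calc ∑ j, ((E * R) j i) ^ 2 = ∑ j, (∑ l, E j l * R l i) ^ 2 := by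
            refine Finset.sum_congr rfl fun j _ => ?_
            rw [Matrix.mul_apply]
        _ ≤ frobSq E * ∑ l, (R l i) ^ 2 := mulvec_sq_le E _
        _ = δ' * ∑ l, (R l i) ^ 2 := by rw [hδ']
        _ = δ' := by
            have hRcol : ∑ l, (R l i) ^ 2 = (Rᵀ * R) i i := by
              rw [Matrix.mul_apply]
              exact Finset.sum_congr rfl fun l _ => by rw [Matrix.transpose_apply, sq]
            rw [hRcol, hRtR, Matrix.one_apply_eq, mul_one]
    rw [h2]
    linarith
  set XO := B * R * Matrix.diagonal (fun i => (Real.sqrt (s i))⁻¹) with hX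
  have hspos : ∀ i, 0 < s i := fun i => lt_of_lt_of_le h1δ (hsge i)
  have hσ1 : ∀ i, (Real.sqrt (s i))⁻¹ * s i * (Real.sqrt (s i))⁻¹ = 1 := by
    intro i
    have hinv : (Real.sqrt (s i))⁻¹ * (Real.sqrt (s i))⁻¹ = (s i)⁻¹ := by
      rw [← mul_inv, Real.mul_self_sqrt (hspos i).le]
    calc (Real.sqrt (s i))⁻¹ * s i * (Real.sqrt (s i))⁻¹
        = s i * ((Real.sqrt (s i))⁻¹ * (Real.sqrt (s i))⁻¹) := by ring
      _ = s i * (s i)⁻¹ := by rw [hinv]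
      _ = 1 := mul_inv_cancel₀ (hspos i).ne'
  have hXX : XOᵀ * XO = 1 := by
    have eX2 : XOᵀ * XO = Matrix.diagonal (fun i => (Real.sqrt (s i))⁻¹)
        * (Rᵀ * (Bᵀ * B) * R) * Matrix.diagonal (fun i => (Real.sqrt (s i))⁻¹) := by
      rw [hX]
      simp only [Matrix.transpose_mul, Matrix.diagonal_transpose, Matrix.mul_assoc]
    rw [eX2, ← hds, Matrix.diagonal_mul_diagonal, Matrix.diagonal_mul_diagonal]
    rw [show (fun i => (Real.sqrt (s i))⁻¹ * s i * (Real.sqrt (s i))⁻¹) = fun _ => (1:ℝ) from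
      funext hσ1]
    exact Matrix.diagonal_one
  have htrXQc : (XOᵀ * Qc * XO).trace ≤ (1 - δ')⁻¹ * A.trace := by
    have hGpsd : (Rᵀ * A * R).PosSemidef := by
      have := hApsd.conjTranspose_mul_mul_same R
      rwa [Matrix.conjTranspose_eq_transpose_of_trivial] at this
    have eXQ : XOᵀ * Qc * XO = Matrix.diagonal (fun i => (Real.sqrt (s i))⁻¹)
        * (Rᵀ * A * R) * Matrix.diagonal (fun i => (Real.sqrt (s i))⁻¹) := by
      rw [← hBtQcB, hX]
      simp only [Matrix.transpose_mul, Matrix.diagonal_transpose, Matrix.mul_assoc]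
    have htrdiag : (XOᵀ * Qc * XO).trace
        = ∑ i, (Real.sqrt (s i))⁻¹ * ((Rᵀ * A * R) i i) * (Real.sqrt (s i))⁻¹ := by
      rw [eXQ, Matrix.trace]
      refine Finset.sum_congr rfl fun i _ => ?_
      rw [Matrix.diag]
      rw [Matrix.mul_diagonal, Matrix.diagonal_mul]
    have hterm : ∀ i, (Real.sqrt (s i))⁻¹ * ((Rᵀ * A * R) i i) * (Real.sqrt (s i))⁻¹
        ≤ (1 - δ')⁻¹ * ((Rᵀ * A * R) i i) := by
      intro i
      have hGi := psd_diag_nonneg hGpsd i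
      have hinv : (Real.sqrt (s i))⁻¹ * (Real.sqrt (s i))⁻¹ = (s i)⁻¹ := by
        rw [← mul_inv, Real.mul_self_sqrt (hspos i).le]
      have hinvle : (s i)⁻¹ ≤ (1 - δ')⁻¹ := by
        apply inv_anti₀ h1δ (hsge i)
      calc (Real.sqrt (s i))⁻¹ * ((Rᵀ * A * R) i i) * (Real.sqrt (s i))⁻¹
          = ((Rᵀ * A * R) i i) * ((Real.sqrt (s i))⁻¹ * (Real.sqrt (s i))⁻¹) := by ring
        _ = ((Rᵀ * A * R) i i) * (s i)⁻¹ := by rw [hinv]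
        _ ≤ ((Rᵀ * A * R) i i) * (1 - δ')⁻¹ := mul_le_mul_of_nonneg_left hinvle hGi
        _ = (1 - δ')⁻¹ * ((Rᵀ * A * R) i i) := mul_comm _ _
    have htrG : (Rᵀ * A * R).trace = A.trace := by
      rw [Matrix.trace_mul_cycle, ← Matrix.mul_assoc, hRRt, Matrix.one_mul]
    calc (XOᵀ * Qc * XO).trace
        = ∑ i, (Real.sqrt (s i))⁻¹ * ((Rᵀ * A * R) i i) * (Real.sqrt (s i))⁻¹ := htrdiag
      _ ≤ ∑ i, (1 - δ')⁻¹ * ((Rᵀ * A * R) i i) := Finset.sum_le_sum fun i _ => hterm i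
      _ = (1 - δ')⁻¹ * (Rᵀ * A * R).trace := by rw [← Finset.mul_sum, Matrix.trace]; rfl
      _ = (1 - δ')⁻¹ * A.trace := by rw [htrG]
  -- Ky Fan side
  have hLct : Lcᵀ = Lc := by
    rw [hcons, Matrix.transpose_mul, Matrix.transpose_mul,
      Matrix.transpose_transpose, hLt, Matrix.mul_assoc]
  obtain ⟨P, d, hPtP, hPPt, hLcdec⟩ := real_spectral Lc hLct
  have hmult : Multiset.map d Finset.univ.val = Multiset.map μc Finset.univ.val := by
    have h1 : (∏ i, (X - C (d i)) : ℝ[X]) = ∏ i, (X - C (μc i)) := by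
      rw [← charpoly_diagonal_fin, ← charpoly_similar (Matrix.diagonal d) P Pᵀ hPPt,
        ← hLcdec, hμc.2]
    exact multiset_eq_of_prods d μc h1
  set Y := Pᵀ * XO with hY
  set w : Fin n → ℝ := fun i => ∑ j, (Y i j) ^ 2 with hw
  have hw0 : ∀ i, 0 ≤ w i := fun i => Finset.sum_nonneg fun j _ => sq_nonneg _
  have hw1 : ∀ i, w i ≤ 1 := by
    intro i
    have hXXt2 : (XO * XOᵀ) * (XO * XOᵀ) = XO * XOᵀ := by
      rw [Matrix.mul_assoc, ← Matrix.mul_assoc XOᵀ XO XOᵀ, hXX, Matrix.one_mul]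
    have hXXsym : (XO * XOᵀ)ᵀ = XO * XOᵀ := by
      rw [Matrix.transpose_mul, Matrix.transpose_transpose]
    have hpsd1 : ((1 : Matrix (Fin n) (Fin n) ℝ) - XO * XOᵀ).PosSemidef := by
      have hidem : (1 : Matrix (Fin n) (Fin n) ℝ) - XO * XOᵀ
          = ((1 : Matrix (Fin n) (Fin n) ℝ) - XO * XOᵀ)ᵀ * (1 - XO * XOᵀ) := by
        rw [Matrix.transpose_sub, Matrix.transpose_one, hXXsym]
        simp only [Matrix.mul_sub, Matrix.sub_mul, Matrix.mul_one, Matrix.one_mul, hXXt2]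
        abel
      rw [hidem, ← Matrix.conjTranspose_eq_transpose_of_trivial]
      exact Matrix.posSemidef_conjTranspose_mul_self _
    have hYY : (1 : Matrix (Fin n) (Fin n) ℝ) - Y * Yᵀ = Pᵀ * ((1 - XO * XOᵀ) * P) := by
      rw [Matrix.sub_mul, Matrix.one_mul, Matrix.mul_sub, ← Matrix.mul_assoc, hPtP, hY,
        Matrix.transpose_mul Pᵀ XO, Matrix.transpose_transpose]
      simp only [Matrix.mul_assoc]
    have hpsd2 : ((1 : Matrix (Fin n) (Fin n) ℝ) - Y * Yᵀ).PosSemidef := by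
      rw [hYY, ← Matrix.mul_assoc]
      have := hpsd1.conjTranspose_mul_mul_same P
      rwa [Matrix.conjTranspose_eq_transpose_of_trivial] at this
    have hdg := psd_diag_nonneg hpsd2 i
    rw [Matrix.sub_apply, Matrix.one_apply_eq, Matrix.mul_apply] at hdg
    have : (∑ j, Y i j * Yᵀ j i) = w i := by
      rw [hw]
      exact Finset.sum_congr rfl fun j _ => by rw [Matrix.transpose_apply, sq]
    rw [this] at hdg
    linarith
  have hws : ∑ i, w i = (m : ℝ) := by
    have h1 : ∑ i, w i = frobSq Y := rfl
    have h2 : Yᵀ * Y = 1 := by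
      rw [hY, Matrix.transpose_mul Pᵀ XO, Matrix.transpose_transpose, Matrix.mul_assoc,
        ← Matrix.mul_assoc P Pᵀ XO, hPPt, Matrix.one_mul, hXX]
    rw [h1, frobSq_eq_trace, h2, Matrix.trace_one]
    simp
  have htrXL : (XOᵀ * Lc * XO).trace = ∑ i, d i * w i := by
    have e1 : XOᵀ * Lc * XO = Yᵀ * (Matrix.diagonal d * Y) := by
      rw [hLcdec, hY, Matrix.transpose_mul Pᵀ XO, Matrix.transpose_transpose]
      simp only [Matrix.mul_assoc]
    rw [e1, trace_transpose_mul_eq]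
    refine Finset.sum_congr rfl fun i _ => ?_
    rw [hw, Finset.mul_sum]
    refine Finset.sum_congr rfl fun j _ => ?_
    rw [Matrix.diagonal_mul]
    ring
  have htrXQc2 : (XOᵀ * Qc * XO).trace = 2 * m - ∑ i, d i * w i := by
    have e2 : XOᵀ * Qc * XO = (2:ℝ) • (1 : Matrix (Fin m) (Fin m) ℝ) - XOᵀ * Lc * XO := by
      rw [hQcdef, Matrix.mul_sub, Matrix.sub_mul, Matrix.mul_smul, Matrix.mul_one,
        Matrix.smul_mul, hXX]
    rw [e2, Matrix.trace_sub, Matrix.trace_smul, Matrix.trace_one, htrXL]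
    simp
  have hwb : ∑ i, d i * w i ≤ ∑ t : Fin m, μc ⟨k + t.1, by omega⟩ :=
    weight_bound hkm μc hμc.1 d w hmult hw0 hw1 hws
  have hT : (∑ t : Fin m, (2 - μc ⟨k + t.1, by omega⟩)) = 2 * m - ∑ t : Fin m, μc ⟨k + t.1, by omega⟩ := by
    rw [Finset.sum_sub_distrib]
    simp [Finset.sum_const, Finset.card_univ]
    ring
  have hchain : (∑ t : Fin m, (2 - μc ⟨k + t.1, by omega⟩))
      ≤ (1 - δ')⁻¹ * (S' + 2 * (Real.sqrt (2 * S') * Real.sqrt δ') + 2 * δ') := by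
    have h1 : (∑ t : Fin m, (2 - μc ⟨k + t.1, by omega⟩)) ≤ (XOᵀ * Qc * XO).trace := by
      rw [htrXQc2, hT]; linarith
    have h2 : (1 - δ')⁻¹ * A.trace ≤ (1 - δ')⁻¹ * (S' + 2 * (Real.sqrt (2 * S') * Real.sqrt δ') + 2 * δ') := by
      apply mul_le_mul_of_nonneg_left htrA (by positivity)
    linarith
  -- final algebra
  have hsqrt8 : Real.sqrt (8 * δ' * S') = 2 * (Real.sqrt (2 * S') * Real.sqrt δ') := by
    rw [show (8:ℝ) * δ' * S' = 4 * ((2 * S') * δ') by ring]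
    rw [Real.sqrt_mul (by norm_num : (0:ℝ) ≤ 4),
      Real.sqrt_mul (by positivity : (0:ℝ) ≤ 2 * S')]
    rw [show (4:ℝ) = 2 ^ 2 by norm_num, Real.sqrt_sq (by norm_num : (0:ℝ) ≤ 2)]
  rw [hsqrt8]
  have hfin : (δ' * (2 + S') + 2 * (Real.sqrt (2 * S') * Real.sqrt δ')) / (1 - δ')
      = (1 - δ')⁻¹ * (S' + 2 * (Real.sqrt (2 * S') * Real.sqrt δ') + 2 * δ') - S' := by
    field_simp
    ring
  rw [hfin]
  linarith

/-- **Tail eigenvalue gap bound via the signless Laplacian.**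
For a consistent coarsening `L_c = C L Cᵀ` and `Ũ` the eigenvectors of `L` for its
`n - k` largest eigenvalues, with `δ' = ‖(I - CᵀC)Ũ‖_F² < 1` and
`λ̃(j) = 2 - λ(N+1-j)`, the tail gaps satisfy
`∑_{j=k+1}^{n} (λ(j+N-n) - λ_c(j)) ≤ (δ'(2 + ∑ λ̃) + √(8δ' ∑ λ̃))/(1 - δ')`. -/
theorem tail_eigenvalue_gap_bound {N n k : ℕ} (hk : k ≤ n) (hnN : n ≤ N)
    (W : Matrix (Fin N) (Fin N) ℝ)
    (hsymm : W.IsSymm) (hnonneg : ∀ i j, 0 ≤ W i j) (hdeg : ∀ i, 0 < deg W i)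
    (f : Fin N → Fin n) (hsurj : Function.Surjective f)
    (μ : Fin N → ℝ) (U : Matrix (Fin N) (Fin N) ℝ)
    (hUorth : Uᵀ * U = 1) (hmono : Monotone μ)
    (hdecomp : normLap W = U * Matrix.diagonal μ * Uᵀ)
    (hcons : normLap (coarse f W) = coarsenMat f * normLap W * (coarsenMat f)ᵀ)
    (μc : Fin n → ℝ) (hμc : sortedEigs (normLap (coarse f W)) μc)
    (Ut : Matrix (Fin N) (Fin (n - k)) ℝ)
    (hUt : Ut = U.submatrix id
        (fun j : Fin (n - k) => ⟨N - (n - k) + j.1, by have := j.2; omega⟩))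
    (δ' : ℝ) (hδ' : δ' = frobSq ((1 - (coarsenMat f)ᵀ * coarsenMat f) * Ut))
    (hδ'1 : δ' < 1)
    (S' : ℝ)
    (hS' : S' = ∑ j : Fin (n - k), (2 - μ ⟨N - 1 - j.1, by have := j.2; omega⟩)) :
    (∑ t : Fin (n - k),
        ((2 - μ ⟨N - 1 - t.1, by have := t.2; omega⟩) -
          (2 - μc ⟨n - 1 - t.1, by have := t.2; omega⟩)) ≥
      -((δ' * (2 + S') + Real.sqrt (8 * δ' * S')) / (1 - δ'))) ∧
    (∑ t : Fin (n - k),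
        (μ ⟨k + t.1 + N - n, by have := t.2; omega⟩ -
          μc ⟨k + t.1, by have := t.2; omega⟩) ≤
      (δ' * (2 + S') + Real.sqrt (8 * δ' * S')) / (1 - δ')) := by
  have hkm : k + (n - k) = n := by omega
  have hUt' : ∀ (i : Fin N) (j : Fin (n - k)), Ut i j = U i ⟨N - (n - k) + j.1, by omega⟩ := by
    intro i j; rw [hUt]; rfl
  have hS'2 : S' = ∑ j : Fin (n - k), (2 - μ ⟨N - (n - k) + j.1, by omega⟩) := by
    rw [hS']
    refine Fintype.sum_bijective Fin.rev Fin.rev_bijective _ _ fun x => ?_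
    have h2 : (⟨N - 1 - x.1, by have := x.2; omega⟩ : Fin N)
        = ⟨N - (n - k) + (Fin.rev x).1, by omega⟩ :=
      Fin.ext (by simp [Fin.val_rev]; omega)
    rw [h2]
  have key := main_aux hkm hnN W hsymm hnonneg hdeg f hsurj μ U hUorth hdecomp hcons
    μc hμc Ut hUt' δ' hδ' hδ'1 S' hS'2
  have hgoal2 : ∑ t : Fin (n - k),
        (μ ⟨k + t.1 + N - n, by have := t.2; omega⟩ -
          μc ⟨k + t.1, by have := t.2; omega⟩)
      ≤ (δ' * (2 + S') + Real.sqrt (8 * δ' * S')) / (1 - δ') := by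
    have hsum : ∑ t : Fin (n - k),
          (μ ⟨k + t.1 + N - n, by have := t.2; omega⟩ -
            μc ⟨k + t.1, by have := t.2; omega⟩)
        = (∑ t : Fin (n - k), (2 - μc ⟨k + t.1, by omega⟩)) - S' := by
      rw [hS'2, ← Finset.sum_sub_distrib]
      refine Finset.sum_congr rfl fun t _ => ?_
      have he : (⟨k + t.1 + N - n, by have := t.2; omega⟩ : Fin N)
          = ⟨N - (n - k) + t.1, by omega⟩ := Fin.ext (by have := t.2; simp; omega)
      rw [he]; ring
    rw [hsum]
    exact key
  refine ⟨?_, hgoal2⟩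
  have hrev : (∑ t : Fin (n - k),
        ((2 - μ ⟨N - 1 - t.1, by have := t.2; omega⟩) -
          (2 - μc ⟨n - 1 - t.1, by have := t.2; omega⟩)))
      = ∑ t : Fin (n - k),
          -(μ ⟨k + t.1 + N - n, by have := t.2; omega⟩ -
            μc ⟨k + t.1, by have := t.2; omega⟩) := by
    refine Fintype.sum_bijective Fin.rev Fin.rev_bijective _ _ fun x => ?_
    have h1 : (⟨n - 1 - x.1, by have := x.2; omega⟩ : Fin n)
        = ⟨k + (Fin.rev x).1, by omega⟩ := Fin.ext (by simp [Fin.val_rev]; omega)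
    have h2 : (⟨N - 1 - x.1, by have := x.2; omega⟩ : Fin N)
        = ⟨k + (Fin.rev x).1 + N - n, by omega⟩ := Fin.ext (by simp [Fin.val_rev]; omega)
    rw [h1, h2]; ring
  rw [hrev, Finset.sum_neg_distrib]
  linarith [hgoal2]
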